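/- arXiv:0904.3132 — 2 statements merged into one kernel-verified Lean document; each statement's English description precedes it below -/
import Mathlib

section
/- Explicit inverse of the multinomial Fisher-information square root: let d ≥ 1 and p ∈ ℝ^d with p_i > 0 for all i and p_0 := 1 − Σ_{i=1}^d p_i > 0, let P = diag(p), and set J := P^{1/2} − p pᵀ P^{-1/2}/(1 + √(1 − pᵀP^{-1}p)). Then J is invertible and J^{-1} = P^{-1/2} + P^{-1/2} p pᵀ P^{-1} / ( 1 − pᵀP^{-1}p + √(1 − pᵀP^{-1}p) ). -/
open Matrix
open scoped BigOperators

noncomputable section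

private lemma diag_inv_aux {n : Type*} [Fintype n] [DecidableEq n] (v : n → ℝ)
    (hv : ∀ i, v i ≠ 0) :
    (Matrix.diagonal v)⁻¹ = Matrix.diagonal (fun i => (v i)⁻¹) := by
  apply Matrix.inv_eq_right_inv
  rw [Matrix.diagonal_mul_diagonal,
    show (fun i => v i * (v i)⁻¹) = fun _ => (1:ℝ) from funext fun i => mul_inv_cancel₀ (hv i),
    Matrix.diagonal_one]

private lemma vmv_mul_diag {n : Type*} [Fintype n] [DecidableEq n] (u v f : n → ℝ) :
    Matrix.vecMulVec u v * Matrix.diagonal f = Matrix.vecMulVec u (fun j => v j * f j) := by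
  ext i j; simp [Matrix.mul_diagonal, Matrix.vecMulVec_apply, mul_assoc]

private lemma vmv_mul_vmv {n : Type*} [Fintype n] [DecidableEq n] (u v w x : n → ℝ) :
    Matrix.vecMulVec u v * Matrix.vecMulVec w x =
      (dotProduct v w) • Matrix.vecMulVec u x := by
  ext i j
  simp only [Matrix.mul_apply, Matrix.vecMulVec_apply, Matrix.smul_apply, smul_eq_mul,
    dotProduct, Finset.sum_mul]
  exact Finset.sum_congr rfl fun k _ => by ring

/-- The candidate square root
`J = P^{1/2} − p pᵀ P^{-1/2}/(1 + √(1 − pᵀP⁻¹p))`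
of the multinomial Fisher information `F = P − ppᵀ`, where `P = diag(p)`. -/
def multJ (d : ℕ) (p : Fin d → ℝ) : Matrix (Fin d) (Fin d) ℝ :=
  Matrix.diagonal (fun i => Real.sqrt (p i)) -
    (1 + Real.sqrt (1 - dotProduct p ((Matrix.diagonal p)⁻¹.mulVec p)))⁻¹ •
      (Matrix.vecMulVec p p * (Matrix.diagonal fun i => Real.sqrt (p i))⁻¹)

/-- **Theorem (Statement 16).** Explicit inverse of the multinomial Fisher-information
square root: if `p_i > 0` for all `i` and `p₀ = 1 − Σ p_i > 0`, then
`J = P^{1/2} − p pᵀ P^{-1/2}/(1 + √(1 − pᵀP⁻¹p))` is invertible and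
`J⁻¹ = P^{-1/2} + P^{-1/2} p pᵀ P^{-1}/(1 − pᵀP⁻¹p + √(1 − pᵀP⁻¹p))`. -/
theorem multinomial_fisher_sqrt_inverse (d : ℕ) (hd : 1 ≤ d) (p : Fin d → ℝ)
    (hp : ∀ i, 0 < p i) (hp0 : 0 < 1 - ∑ i, p i) :
    IsUnit (multJ d p) ∧
      (multJ d p)⁻¹ =
        (Matrix.diagonal fun i => Real.sqrt (p i))⁻¹ +
          (1 - dotProduct p ((Matrix.diagonal p)⁻¹.mulVec p) +
              Real.sqrt (1 - dotProduct p ((Matrix.diagonal p)⁻¹.mulVec p)))⁻¹ •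
            ((Matrix.diagonal fun i => Real.sqrt (p i))⁻¹ * Matrix.vecMulVec p p *
              (Matrix.diagonal p)⁻¹) := by
  have hpne : ∀ i, p i ≠ 0 := fun i => (hp i).ne'
  have hsp : ∀ i, (0:ℝ) < Real.sqrt (p i) := fun i => Real.sqrt_pos.2 (hp i)
  have hspne : ∀ i, Real.sqrt (p i) ≠ 0 := fun i => (hsp i).ne'
  have hPinv : (Matrix.diagonal p)⁻¹ = Matrix.diagonal (fun i => (p i)⁻¹) :=
    diag_inv_aux p hpne
  have hDinv : (Matrix.diagonal fun i => Real.sqrt (p i))⁻¹ =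
      Matrix.diagonal (fun i => (Real.sqrt (p i))⁻¹) :=
    diag_inv_aux _ hspne
  set t : ℝ := ∑ i, p i with ht
  have hdot : dotProduct p ((Matrix.diagonal p)⁻¹.mulVec p) = t := by
    rw [hPinv]
    simp only [dotProduct, Matrix.mulVec_diagonal, ht]
    exact Finset.sum_congr rfl fun i _ => by
      field_simp
  set s : ℝ := Real.sqrt (1 - t) with hs
  have hs0 : 0 < s := Real.sqrt_pos.2 hp0
  have hss : s * s = 1 - t := Real.mul_self_sqrt hp0.le
  set D : Matrix (Fin d) (Fin d) ℝ := Matrix.diagonal (fun i => Real.sqrt (p i)) with hD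
  set Di : Matrix (Fin d) (Fin d) ℝ := Matrix.diagonal (fun i => (Real.sqrt (p i))⁻¹) with hDi
  set Pi : Matrix (Fin d) (Fin d) ℝ := Matrix.diagonal (fun i => (p i)⁻¹) with hPi
  set V : Matrix (Fin d) (Fin d) ℝ := Matrix.vecMulVec p p with hV
  set a : ℝ := (1 + s)⁻¹ with ha
  set b : ℝ := (1 - t + s)⁻¹ with hb
  have hJ : multJ d p = D - a • (V * Di) := by
    rw [multJ, hdot, hDinv]
  -- basic products
  have q1 : D * Di = 1 := by
    rw [hD, hDi, Matrix.diagonal_mul_diagonal,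
      show (fun i => Real.sqrt (p i) * (Real.sqrt (p i))⁻¹) = fun _ => (1:ℝ) from
        funext fun i => mul_inv_cancel₀ (hspne i), Matrix.diagonal_one]
  have e2 : Di * Di = Pi := by
    rw [hDi, hPi, Matrix.diagonal_mul_diagonal,
      show (fun i => (Real.sqrt (p i))⁻¹ * (Real.sqrt (p i))⁻¹) = fun i => (p i)⁻¹ from
        funext fun i => by rw [← mul_inv, Real.mul_self_sqrt (hp i).le]]
  have e5 : (V * Pi) * (V * Pi) = t • (V * Pi) := by
    rw [hV, hPi, vmv_mul_diag, vmv_mul_vmv]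
    congr 1
    simp only [dotProduct, ht]
    exact Finset.sum_congr rfl fun i _ => by field_simp
  have q2 : D * (Di * V * Pi) = V * Pi := by
    rw [mul_assoc Di V Pi, ← mul_assoc, q1, one_mul]
  have q3 : (V * Di) * Di = V * Pi := by rw [mul_assoc, e2]
  have q4 : (V * Di) * (Di * V * Pi) = t • (V * Pi) := by
    rw [mul_assoc Di V Pi, ← mul_assoc, mul_assoc V Di Di, e2, e5]
  have hc : b - (a + a * (b * t)) = 0 := by
    have h1 : (0:ℝ) < 1 + s := by linarith
    have h2 : (0:ℝ) < 1 - t + s := by linarith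
    rw [ha, hb]
    field_simp
    nlinarith [hss]
  have hJB : (D - a • (V * Di)) * (Di + b • (Di * V * Pi)) = 1 := by
    have expand : (D - a • (V * Di)) * (Di + b • (Di * V * Pi)) =
        1 + (b - (a + a * (b * t))) • (V * Pi) := by
      simp only [sub_mul, mul_add, mul_sub, smul_mul_assoc, mul_smul_comm, q1, q2, q3, q4,
        smul_smul]
      module
    rw [expand, hc, zero_smul, add_zero]
  have hBJ : (Di + b • (Di * V * Pi)) * (D - a • (V * Di)) = 1 :=
    mul_eq_one_comm.1 hJB
  constructor
  · rw [hJ]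
    exact ⟨⟨_, _, hJB, hBJ⟩, rfl⟩
  · rw [hJ, hdot, hDinv, hPinv, Matrix.inv_eq_right_inv hJB, ← hs, ← hb]
end
end

section
/- Identifiability lower bound for the seemingly-unrelated-regressions parametrization: let λ > 0 and M ≥ 1 with λ/(4M) ≤ 1/4. Let A_0 and A be real d×d matrices such that the smallest singular value of A_0 is at least λ, and let B_0 and B be real m×d matrices with operator norm ‖B‖ ≤ M. Then max{ ‖A − A_0‖_F , ‖BA − B_0A_0‖_F } ≥ (λ/(4M)) · √( ‖A − A_0‖_F² + ‖B − B_0‖_F² ). In particular, the curved-exponential map η = (η_1, η_2) ↦ (η_1, η_2η_1) satisfies Assumption B with ε_0 = λ/(4M) on the set where the smallest singular value of η_{01} is at least λ and ‖η_2‖ ≤ M. -/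
open Matrix
open scoped BigOperators RealInnerProductSpace

noncomputable section

/-- The Frobenius norm of a real matrix. -/
def frobNorm {m n : ℕ} (A : Matrix (Fin m) (Fin n) ℝ) : ℝ :=
  Real.sqrt (∑ i, ∑ j, A i j ^ 2)

lemma frobNorm_nonneg {m n : ℕ} (A : Matrix (Fin m) (Fin n) ℝ) : 0 ≤ frobNorm A :=
  Real.sqrt_nonneg _

lemma frobNorm_eq_norm {m n : ℕ} (A : Matrix (Fin m) (Fin n) ℝ) :
    frobNorm A =
      ‖((WithLp.equiv 2 (Fin m × Fin n → ℝ)).symm (fun p => A p.1 p.2) :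
        EuclideanSpace ℝ (Fin m × Fin n))‖ := by
  rw [EuclideanSpace.norm_eq, frobNorm]
  congr 1
  rw [Fintype.sum_prod_type]
  simp [Real.norm_eq_abs, sq_abs]

lemma frobNorm_sq_rows {m n : ℕ} (A : Matrix (Fin m) (Fin n) ℝ) :
    frobNorm A ^ 2 = ∑ i, ‖((WithLp.equiv 2 (Fin n → ℝ)).symm (A i) :
      EuclideanSpace ℝ (Fin n))‖ ^ 2 := by
  rw [frobNorm, Real.sq_sqrt (by positivity)]
  refine Finset.sum_congr rfl fun i _ => ?_
  rw [EuclideanSpace.norm_eq, Real.sq_sqrt (by positivity)]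
  simp [Real.norm_eq_abs, sq_abs]

lemma frobNorm_sq_cols {m n : ℕ} (A : Matrix (Fin m) (Fin n) ℝ) :
    frobNorm A ^ 2 = ∑ j, ‖((WithLp.equiv 2 (Fin m → ℝ)).symm (fun i => A i j) :
      EuclideanSpace ℝ (Fin m))‖ ^ 2 := by
  rw [frobNorm, Real.sq_sqrt (by positivity), Finset.sum_comm]
  refine Finset.sum_congr rfl fun j _ => ?_
  rw [EuclideanSpace.norm_eq, Real.sq_sqrt (by positivity)]
  simp [Real.norm_eq_abs, sq_abs]

lemma frobNorm_add_le {m n : ℕ} (A B : Matrix (Fin m) (Fin n) ℝ) :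
    frobNorm (A + B) ≤ frobNorm A + frobNorm B := by
  rw [frobNorm_eq_norm, frobNorm_eq_norm A, frobNorm_eq_norm B]
  have : ((WithLp.equiv 2 (Fin m × Fin n → ℝ)).symm (fun p => (A + B) p.1 p.2) :
      EuclideanSpace ℝ (Fin m × Fin n)) =
      (WithLp.equiv 2 (Fin m × Fin n → ℝ)).symm (fun p => A p.1 p.2) +
      (WithLp.equiv 2 (Fin m × Fin n → ℝ)).symm (fun p => B p.1 p.2) := by
    rw [WithLp.equiv_symm_apply, ← WithLp.toLp_add]
    rfl
  rw [this]
  exact norm_add_le _ _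

/-- **Theorem (Statement 17).** Identifiability lower bound for the
seemingly-unrelated-regressions parametrization: if `λ > 0`, `M ≥ 1`, `λ/(4M) ≤ 1/4`,
the smallest singular value of `A₀` is at least `λ`, and `‖B‖ ≤ M` in operator norm, then
`max{‖A − A₀‖_F, ‖BA − B₀A₀‖_F} ≥ (λ/(4M))·√(‖A − A₀‖_F² + ‖B − B₀‖_F²)`.
(Hence the curved-exponential map `(η₁, η₂) ↦ (η₁, η₂η₁)` satisfies Assumption B with
`ε₀ = λ/(4M)`.) -/
theorem sur_identifiability_lower_bound (d m : ℕ) (lam M : ℝ)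
    (hlam : 0 < lam) (hM : 1 ≤ M) (hlM : lam / (4 * M) ≤ 1 / 4)
    (A₀ A : Matrix (Fin d) (Fin d) ℝ) (B₀ B : Matrix (Fin m) (Fin d) ℝ)
    -- the smallest singular value of A₀ is at least λ
    (hA₀ : ∀ x : EuclideanSpace ℝ (Fin d), lam * ‖x‖ ≤ ‖Matrix.toEuclideanLin A₀ x‖)
    -- ‖B‖ ≤ M in operator norm
    (hB : ∀ x : EuclideanSpace ℝ (Fin d), ‖Matrix.toEuclideanLin B x‖ ≤ M * ‖x‖) :
    lam / (4 * M) * Real.sqrt (frobNorm (A - A₀) ^ 2 + frobNorm (B - B₀) ^ 2) ≤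
      max (frobNorm (A - A₀)) (frobNorm (B * A - B₀ * A₀)) := by
  have hM0 : (0:ℝ) < M := lt_of_lt_of_le one_pos hM
  -- transpose singular value bound
  have hA₀T : ∀ x : EuclideanSpace ℝ (Fin d),
      lam * ‖x‖ ≤ ‖Matrix.toEuclideanLin A₀ᵀ x‖ := by
    intro x
    have hadj : Matrix.toEuclideanLin A₀ᵀ = LinearMap.adjoint (Matrix.toEuclideanLin A₀) := by
      rw [← Matrix.conjTranspose_eq_transpose_of_trivial,
        Matrix.toEuclideanLin_conjTranspose_eq_adjoint]
    rcases eq_or_ne x 0 with rfl | hx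
    · simp
    have hxn : (0:ℝ) < ‖x‖ := norm_pos_iff.mpr hx
    -- toEuclideanLin A₀ is surjective
    have hinj : Function.Injective (Matrix.toEuclideanLin A₀) := by
      rw [← LinearMap.ker_eq_bot, LinearMap.ker_eq_bot']
      intro y hy
      have := hA₀ y
      rw [hy, norm_zero] at this
      have : ‖y‖ ≤ 0 := by nlinarith
      exact norm_le_zero_iff.mp this
    obtain ⟨y, hy⟩ := (LinearMap.injective_iff_surjective.mp hinj) x
    have h1 : @inner ℝ _ _ (Matrix.toEuclideanLin A₀ᵀ x) y = ‖x‖ ^ 2 := by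
      rw [hadj, LinearMap.adjoint_inner_left, hy, real_inner_self_eq_norm_sq]
    have h2 : @inner ℝ _ _ (Matrix.toEuclideanLin A₀ᵀ x) y ≤ ‖Matrix.toEuclideanLin A₀ᵀ x‖ * ‖y‖ :=
      real_inner_le_norm _ _
    have h3 : lam * ‖y‖ ≤ ‖x‖ := by
      have := hA₀ y
      rwa [hy] at this
    have hyn : 0 ≤ ‖y‖ := norm_nonneg _
    have hTn : 0 ≤ ‖Matrix.toEuclideanLin A₀ᵀ x‖ := norm_nonneg _
    nlinarith [h1, h2, h3]
  -- row bound: lam * frobNorm (B - B₀) ≤ frobNorm ((B - B₀) * A₀)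
  have hrow : lam * frobNorm (B - B₀) ≤ frobNorm ((B - B₀) * A₀) := by
    have hsq : (lam * frobNorm (B - B₀)) ^ 2 ≤ frobNorm ((B - B₀) * A₀) ^ 2 := by
      rw [mul_pow, frobNorm_sq_rows ((B - B₀) * A₀), frobNorm_sq_rows (B - B₀),
        Finset.mul_sum]
      refine Finset.sum_le_sum fun i _ => ?_
      have key : ((WithLp.equiv 2 (Fin d → ℝ)).symm (((B - B₀) * A₀) i) :
          EuclideanSpace ℝ (Fin d)) =
          Matrix.toEuclideanLin A₀ᵀ
            ((WithLp.equiv 2 (Fin d → ℝ)).symm ((B - B₀) i)) := by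
        rw [WithLp.equiv_symm_apply, Matrix.toEuclideanLin_apply_piLp_toLp]
        congr 1
        funext j
        simp [Matrix.mul_apply, Matrix.mulVec, dotProduct, Matrix.transpose,
          mul_comm]
      rw [key]
      have := hA₀T ((WithLp.equiv 2 (Fin d → ℝ)).symm ((B - B₀) i))
      have h0 : (0:ℝ) ≤ lam * ‖((WithLp.equiv 2 (Fin d → ℝ)).symm ((B - B₀) i) :
          EuclideanSpace ℝ (Fin d))‖ := by positivity
      nlinarith
    have h1 : 0 ≤ lam * frobNorm (B - B₀) := mul_nonneg hlam.le (frobNorm_nonneg _)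
    nlinarith [frobNorm_nonneg ((B - B₀) * A₀)]
  -- column bound: frobNorm (B * (A - A₀)) ≤ M * frobNorm (A - A₀)
  have hcol : frobNorm (B * (A - A₀)) ≤ M * frobNorm (A - A₀) := by
    have hsq : frobNorm (B * (A - A₀)) ^ 2 ≤ (M * frobNorm (A - A₀)) ^ 2 := by
      rw [mul_pow, frobNorm_sq_cols (B * (A - A₀)), frobNorm_sq_cols (A - A₀),
        Finset.mul_sum]
      refine Finset.sum_le_sum fun j _ => ?_
      have key : ((WithLp.equiv 2 (Fin m → ℝ)).symm (fun i => (B * (A - A₀)) i j) :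
          EuclideanSpace ℝ (Fin m)) =
          Matrix.toEuclideanLin B
            ((WithLp.equiv 2 (Fin d → ℝ)).symm (fun i => (A - A₀) i j)) := by
        rw [WithLp.equiv_symm_apply, Matrix.toEuclideanLin_apply_piLp_toLp]
        congr 1
      rw [key]
      have := hB ((WithLp.equiv 2 (Fin d → ℝ)).symm (fun i => (A - A₀) i j))
      have h0 : (0:ℝ) ≤ ‖Matrix.toEuclideanLin B
          ((WithLp.equiv 2 (Fin d → ℝ)).symm (fun i => (A - A₀) i j))‖ := norm_nonneg _
      nlinarith
    have h1 : 0 ≤ frobNorm (B * (A - A₀)) := frobNorm_nonneg _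
    nlinarith [mul_nonneg hM0.le (frobNorm_nonneg (A - A₀))]
  -- decomposition
  have hdec : (B - B₀) * A₀ = (B * A - B₀ * A₀) + -(B * (A - A₀)) := by
    simp only [Matrix.sub_mul, Matrix.mul_sub]
    abel
  have htri : frobNorm ((B - B₀) * A₀) ≤
      frobNorm (B * A - B₀ * A₀) + frobNorm (B * (A - A₀)) := by
    rw [hdec]
    calc frobNorm ((B * A - B₀ * A₀) + -(B * (A - A₀)))
        ≤ frobNorm (B * A - B₀ * A₀) + frobNorm (-(B * (A - A₀))) := frobNorm_add_le _ _
      _ = frobNorm (B * A - B₀ * A₀) + frobNorm (B * (A - A₀)) := by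
          congr 1
          unfold frobNorm
          congr 1
          refine Finset.sum_congr rfl fun i _ => Finset.sum_congr rfl fun j _ => ?_
          simp
  set a := frobNorm (A - A₀) with ha
  set b := frobNorm (B - B₀) with hb
  set c := max a (frobNorm (B * A - B₀ * A₀)) with hc
  have ha0 : 0 ≤ a := frobNorm_nonneg _
  have hb0 : 0 ≤ b := frobNorm_nonneg _
  have hac : a ≤ c := le_max_left _ _
  have hc0 : 0 ≤ c := le_trans ha0 hac
  have hfc : frobNorm (B * A - B₀ * A₀) ≤ c := le_max_right _ _
  have hbc : lam * b ≤ c + M * c := by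
    calc lam * b ≤ frobNorm ((B - B₀) * A₀) := hrow
      _ ≤ frobNorm (B * A - B₀ * A₀) + frobNorm (B * (A - A₀)) := htri
      _ ≤ c + M * a := add_le_add hfc hcol
      _ ≤ c + M * c := by nlinarith
  have hsqrt : Real.sqrt (a ^ 2 + b ^ 2) ≤ a + b := by
    rw [show a + b = Real.sqrt ((a + b) ^ 2) by rw [Real.sqrt_sq (by positivity)]]
    apply Real.sqrt_le_sqrt
    nlinarith
  have hlamM : lam ≤ M := by
    have : lam / (4 * M) ≤ 1 / 4 := hlM
    rw [div_le_div_iff₀ (by linarith) (by norm_num)] at this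
    linarith
  have hb2 : b ≤ 2 * M * c / lam := by
    rw [le_div_iff₀ hlam]
    nlinarith
  calc lam / (4 * M) * Real.sqrt (a ^ 2 + b ^ 2)
      ≤ lam / (4 * M) * (a + b) := by
        apply mul_le_mul_of_nonneg_left hsqrt (by positivity)
    _ ≤ c := by
        have h1 : lam / (4 * M) * (a + b) ≤ lam / (4 * M) * (c + 2 * M * c / lam) := by
          apply mul_le_mul_of_nonneg_left _ (by positivity)
          exact add_le_add hac hb2
        have h2 : lam / (4 * M) * (c + 2 * M * c / lam) = (lam / (4 * M)) * c + c / 2 := by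
          field_simp
          ring
        have h3 : (lam / (4 * M)) * c ≤ (1/4) * c := mul_le_mul_of_nonneg_right hlM hc0
        linarith
end
end
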